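/- Let E be a compact connected subset of the open unit disk B² = {z ∈ ℂ : |z| < 1} containing at least two points. Then the elliptic capacity of E does not exceed its hyperbolic capacity: cap_e(E) ≤ cap_h(E), where cap_h(E) = lim_{n→∞} d_n(E) and cap_e(E) = lim_{n→∞} e_n(E) (both limits exist since the sequences of diameters are nonincreasing). -/

import Mathlib

open Filter Topology

/-- The product `∏_{k<j} |z_k−z_j|/|1−z_k·conj(z_j)|` over an `n`-tuple of points. -/
noncomputable def hypProd (n : ℕ) (z : Fin n → ℂ) : ℝ :=
  ∏ p ∈ Finset.univ.filter (fun p : Fin n × Fin n => p.1 < p.2),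
    ‖z p.1 - z p.2‖ / ‖1 - z p.1 * (starRingEnd ℂ) (z p.2)‖

/-- The `n`-th hyperbolic diameter of `E`. -/
noncomputable def hypDiam (E : Set ℂ) (n : ℕ) : ℝ :=
  sSup {x : ℝ | ∃ z : Fin n → ℂ, (∀ i, z i ∈ E) ∧ hypProd n z = x}
    ^ ((2 : ℝ) / ((n : ℝ) * ((n : ℝ) - 1)))

/-- The product `∏_{k<j} |z_k−z_j|/|1+z_k·conj(z_j)|` over an `n`-tuple of points. -/
noncomputable def ellProd (n : ℕ) (z : Fin n → ℂ) : ℝ :=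
  ∏ p ∈ Finset.univ.filter (fun p : Fin n × Fin n => p.1 < p.2),
    ‖z p.1 - z p.2‖ / ‖1 + z p.1 * (starRingEnd ℂ) (z p.2)‖

/-- The `n`-th elliptic diameter of `E`. -/
noncomputable def ellDiam (E : Set ℂ) (n : ℕ) : ℝ :=
  sSup {x : ℝ | ∃ z : Fin n → ℂ, (∀ i, z i ∈ E) ∧ ellProd n z = x}
    ^ ((2 : ℝ) / ((n : ℝ) * ((n : ℝ) - 1)))

/- ### Auxiliary material -/

noncomputable def termF (u : ℂ) (m : ℕ) : ℝ := ((u ^ m - (-u) ^ m) / (m : ℂ)).re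

lemma hasSum_logRatio {u : ℂ} (hu : ‖u‖ < 1) :
    HasSum (termF u)
      (Real.log (‖1 + u‖) - Real.log (‖1 - u‖)) := by
  have hn : ‖u‖ < 1 := by exact hu
  have h1 : HasSum (fun m : ℕ => u ^ m / (m : ℂ)) (-Complex.log (1 - u)) :=
    Complex.hasSum_taylorSeries_neg_log hn
  have h2 : HasSum (fun m : ℕ => (-u) ^ m / (m : ℂ)) (-Complex.log (1 + u)) := by
    have h := Complex.hasSum_taylorSeries_neg_log (z := -u) (by rwa [norm_neg])
    simpa [sub_neg_eq_add] using h
  have h3 : HasSum (fun m : ℕ => (u ^ m - (-u) ^ m) / (m : ℂ))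
      (Complex.log (1 + u) - Complex.log (1 - u)) := by
    have h := h1.sub h2
    have hf : (fun m : ℕ => (u ^ m - (-u) ^ m) / (m : ℂ))
        = fun m : ℕ => u ^ m / (m : ℂ) - (-u) ^ m / (m : ℂ) := funext fun m => sub_div _ _ _
    rw [hf]
    convert h using 1
    · rfl
    · ring
  have h4 : HasSum (fun m : ℕ => ((u ^ m - (-u) ^ m) / (m : ℂ)).re)
      ((Complex.log (1 + u) - Complex.log (1 - u)).re) := ((Complex.hasSum_iff _ _).mp h3).1
  rw [Complex.sub_re, Complex.log_re, Complex.log_re] at h4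
  exact h4

lemma sum_termF_nonneg (n : ℕ) (z : Fin n → ℂ) (m : ℕ) :
    0 ≤ ∑ p : Fin n × Fin n, termF (z p.1 * (starRingEnd ℂ) (z p.2)) m := by
  have hterm : ∀ p : Fin n × Fin n,
      ((z p.1 * (starRingEnd ℂ) (z p.2)) ^ m - (-(z p.1 * (starRingEnd ℂ) (z p.2))) ^ m) / (m : ℂ)
        = ((1 - (-1 : ℂ) ^ m) / (m : ℂ)) * (z p.1 ^ m * (starRingEnd ℂ) (z p.2 ^ m)) := by
    intro p
    rw [neg_pow, mul_pow, ← map_pow]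
    ring
  have hsum : ∑ p : Fin n × Fin n,
      ((z p.1 * (starRingEnd ℂ) (z p.2)) ^ m - (-(z p.1 * (starRingEnd ℂ) (z p.2))) ^ m) / (m : ℂ)
      = ((1 - (-1 : ℂ) ^ m) / (m : ℂ)) *
          ((∑ i, z i ^ m) * (starRingEnd ℂ) (∑ i, z i ^ m)) := by
    rw [Finset.sum_congr rfl fun p _ => hterm p, ← Finset.mul_sum]
    congr 1
    calc ∑ p : Fin n × Fin n, z p.1 ^ m * (starRingEnd ℂ) (z p.2 ^ m)
        = ∑ i, ∑ j, z i ^ m * (starRingEnd ℂ) (z j ^ m) := Fintype.sum_prod_type _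
      _ = ∑ i, z i ^ m * ∑ j, (starRingEnd ℂ) (z j ^ m) :=
          Finset.sum_congr rfl fun i _ => (Finset.mul_sum _ _ _).symm
      _ = (∑ i, z i ^ m) * ∑ j, (starRingEnd ℂ) (z j ^ m) := (Finset.sum_mul _ _ _).symm
      _ = (∑ i, z i ^ m) * (starRingEnd ℂ) (∑ i, z i ^ m) := by rw [map_sum]
  have hre : ∑ p : Fin n × Fin n, termF (z p.1 * (starRingEnd ℂ) (z p.2)) m
      = (∑ p : Fin n × Fin n,
          ((z p.1 * (starRingEnd ℂ) (z p.2)) ^ m - (-(z p.1 * (starRingEnd ℂ) (z p.2))) ^ m) / (m : ℂ)).re := by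
    rw [Complex.re_sum]
    rfl
  rw [hre, hsum, Complex.mul_conj]
  have hc : ((1 : ℂ) - (-1 : ℂ) ^ m) / (m : ℂ) = (((1 - (-1 : ℝ) ^ m) / (m : ℝ) : ℝ) : ℂ) := by
    push_cast
    ring
  rw [hc, ← Complex.ofReal_mul, Complex.ofReal_re]
  apply mul_nonneg _ (Complex.normSq_nonneg _)
  rcases Nat.even_or_odd m with he | ho
  · rw [he.neg_one_pow]
    simp
  · rw [ho.neg_one_pow]
    positivity

lemma sum_pairs {n : ℕ} (g : Fin n × Fin n → ℝ) (hsymm : ∀ i j, g (i, j) = g (j, i)) :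
    ∑ p : Fin n × Fin n, g p
      = 2 * ∑ p ∈ Finset.univ.filter (fun p : Fin n × Fin n => p.1 < p.2), g p
        + ∑ i : Fin n, g (i, i) := by
  classical
  have hsplit := Finset.sum_filter_add_sum_filter_not (Finset.univ : Finset (Fin n × Fin n))
      (fun p => p.1 < p.2) g
  have hsplit2 := Finset.sum_filter_add_sum_filter_not
      ((Finset.univ : Finset (Fin n × Fin n)).filter (fun p => ¬ p.1 < p.2))
      (fun p => p.2 < p.1) g
  have e1 : ((Finset.univ : Finset (Fin n × Fin n)).filter (fun p => ¬ p.1 < p.2)).filter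
        (fun p => p.2 < p.1)
      = (Finset.univ : Finset (Fin n × Fin n)).filter (fun p => p.2 < p.1) := by
    ext p
    simp only [Finset.mem_filter, Finset.mem_univ, true_and]
    exact ⟨fun h => h.2, fun h => ⟨lt_asymm h, h⟩⟩
  have e2 : ((Finset.univ : Finset (Fin n × Fin n)).filter (fun p => ¬ p.1 < p.2)).filter
        (fun p => ¬ p.2 < p.1)
      = (Finset.univ : Finset (Fin n × Fin n)).filter (fun p => p.1 = p.2) := by
    ext p
    simp only [Finset.mem_filter, Finset.mem_univ, true_and, not_lt]
    constructor
    · rintro ⟨h1, h2⟩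
      exact le_antisymm h2 h1
    · rintro h
      exact ⟨le_of_eq h.symm, le_of_eq h⟩
  have e3 : ∑ p ∈ (Finset.univ : Finset (Fin n × Fin n)).filter (fun p => p.2 < p.1), g p
      = ∑ p ∈ (Finset.univ : Finset (Fin n × Fin n)).filter (fun p => p.1 < p.2), g p := by
    refine Finset.sum_equiv (Equiv.prodComm (Fin n) (Fin n)) (fun p => ?_) (fun p _ => ?_)
    · simp [Equiv.prodComm]
    · rw [Equiv.prodComm_apply]
      have := hsymm p.1 p.2
      exact this
  have e4 : ∑ p ∈ (Finset.univ : Finset (Fin n × Fin n)).filter (fun p => p.1 = p.2), g p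
      = ∑ i : Fin n, g (i, i) := by
    refine Finset.sum_nbij' (fun p => p.1) (fun i => (i, i)) ?_ ?_ ?_ ?_ ?_
    · intro a _
      exact Finset.mem_univ _
    · intro i _
      simp
    · intro a ha
      simp only [Finset.mem_filter, Finset.mem_univ, true_and] at ha
      exact Prod.ext rfl ha
    · intro i _
      rfl
    · intro a ha
      simp only [Finset.mem_filter, Finset.mem_univ, true_and] at ha
      exact congrArg g (Prod.ext rfl ha.symm)
  rw [e1, e2, e3, e4] at hsplit2
  linarith [hsplit, hsplit2]

lemma abs_sub_le_abs_one_sub {z w : ℂ} (hz : ‖z‖ ≤ 1) (hw : ‖w‖ ≤ 1) :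
    ‖z - w‖ ≤ ‖1 - z * (starRingEnd ℂ) w‖ := by
  have hz2 : Complex.normSq z ≤ 1 := by
    rw [Complex.normSq_eq_norm_sq]
    nlinarith [norm_nonneg z]
  have hw2 : Complex.normSq w ≤ 1 := by
    rw [Complex.normSq_eq_norm_sq]
    nlinarith [norm_nonneg w]
  have expand : Complex.normSq (1 - z * (starRingEnd ℂ) w) - Complex.normSq (z - w)
      = (1 - Complex.normSq z) * (1 - Complex.normSq w) := by
    simp only [Complex.normSq_apply, Complex.sub_re, Complex.sub_im, Complex.mul_re,
      Complex.mul_im, Complex.one_re, Complex.one_im, Complex.conj_re, Complex.conj_im]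
    ring
  have key : Complex.normSq (z - w) ≤ Complex.normSq (1 - z * (starRingEnd ℂ) w) := by
    nlinarith
  rw [Complex.norm_def, Complex.norm_def]
  exact Real.sqrt_le_sqrt key

lemma one_sub_ne_zero' {u : ℂ} (hu : ‖u‖ < 1) : (1 : ℂ) - u ≠ 0 := by
  intro h
  rw [sub_eq_zero] at h
  rw [← h] at hu
  simp at hu

lemma one_add_ne_zero' {u : ℂ} (hu : ‖u‖ < 1) : (1 : ℂ) + u ≠ 0 := by
  intro h
  have hu' : u = -1 := by
    have := eq_neg_of_add_eq_zero_right h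
    simpa using this
  rw [hu'] at hu
  simp at hu

lemma hypProd_nonneg (n : ℕ) (z : Fin n → ℂ) : 0 ≤ hypProd n z :=
  Finset.prod_nonneg fun p _ => div_nonneg (norm_nonneg _) (norm_nonneg _)

lemma ellProd_nonneg (n : ℕ) (z : Fin n → ℂ) : 0 ≤ ellProd n z :=
  Finset.prod_nonneg fun p _ => div_nonneg (norm_nonneg _) (norm_nonneg _)

lemma hypProd_le_one (n : ℕ) (z : Fin n → ℂ) (hz : ∀ i, ‖z i‖ < 1) :
    hypProd n z ≤ 1 := by
  apply Finset.prod_le_one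
  · intro p _
    exact div_nonneg (norm_nonneg _) (norm_nonneg _)
  · intro p _
    exact div_le_one_of_le₀ (abs_sub_le_abs_one_sub (hz p.1).le (hz p.2).le)
      (norm_nonneg _)

lemma ellProd_le_hypProd {n : ℕ} (z : Fin n → ℂ) {R : ℝ} (hR0 : 0 ≤ R) (hR1 : R < 1)
    (hz : ∀ i, ‖z i‖ ≤ R) :
    ellProd n z ≤ ((1 + R ^ 2) / (1 - R ^ 2)) ^ n * hypProd n z := by
  have hR2 : 0 < 1 - R ^ 2 := by nlinarith
  set D : ℝ := (1 + R ^ 2) / (1 - R ^ 2) with hD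
  have hD1 : 1 ≤ D := by
    rw [hD, le_div_iff₀ hR2]
    nlinarith
  have hD0 : 0 < D := lt_of_lt_of_le one_pos hD1
  have hzi : ∀ i, ‖z i‖ < 1 := fun i => lt_of_le_of_lt (hz i) hR1
  have hu : ∀ p : Fin n × Fin n, ‖z p.1 * (starRingEnd ℂ) (z p.2)‖ < 1 := by
    intro p
    rw [norm_mul, Complex.norm_conj]
    nlinarith [norm_nonneg (z p.1), norm_nonneg (z p.2), hzi p.1, hzi p.2]
  have hbpos : ∀ p : Fin n × Fin n, 0 < ‖1 - z p.1 * (starRingEnd ℂ) (z p.2)‖ :=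
    fun p => norm_pos_iff.mpr (one_sub_ne_zero' (hu p))
  have hcpos : ∀ p : Fin n × Fin n, 0 < ‖1 + z p.1 * (starRingEnd ℂ) (z p.2)‖ :=
    fun p => norm_pos_iff.mpr (one_add_ne_zero' (hu p))
  set g : Fin n × Fin n → ℝ := fun p =>
    Real.log (‖1 + z p.1 * (starRingEnd ℂ) (z p.2)‖)
      - Real.log (‖1 - z p.1 * (starRingEnd ℂ) (z p.2)‖) with hg
  have hgsymm : ∀ i j, g (i, j) = g (j, i) := by
    intro i j
    have h1 : (1 : ℂ) + z j * (starRingEnd ℂ) (z i)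
        = (starRingEnd ℂ) (1 + z i * (starRingEnd ℂ) (z j)) := by
      rw [map_add, map_mul, map_one, Complex.conj_conj, mul_comm]
    have h2 : (1 : ℂ) - z j * (starRingEnd ℂ) (z i)
        = (starRingEnd ℂ) (1 - z i * (starRingEnd ℂ) (z j)) := by
      rw [map_sub, map_mul, map_one, Complex.conj_conj, mul_comm]
    simp only [hg, h1, h2, Complex.norm_conj]
  have htot : 0 ≤ ∑ p : Fin n × Fin n, g p := by
    have hHS : ∀ p : Fin n × Fin n, HasSum (termF (z p.1 * (starRingEnd ℂ) (z p.2))) (g p) :=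
      fun p => hasSum_logRatio (hu p)
    calc (0 : ℝ) ≤ ∑' m : ℕ, ∑ p : Fin n × Fin n, termF (z p.1 * (starRingEnd ℂ) (z p.2)) m :=
          tsum_nonneg fun m => sum_termF_nonneg n z m
      _ = ∑ p : Fin n × Fin n, ∑' m : ℕ, termF (z p.1 * (starRingEnd ℂ) (z p.2)) m :=
          Summable.tsum_finsetSum fun p _ => (hHS p).summable
      _ = ∑ p : Fin n × Fin n, g p := Finset.sum_congr rfl fun p _ => (hHS p).tsum_eq
  have hdiag : ∀ i : Fin n, g (i, i) ≤ Real.log D := by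
    intro i
    have hzz : z i * (starRingEnd ℂ) (z i) = (Complex.normSq (z i) : ℂ) := Complex.mul_conj _
    have ht0 : 0 ≤ Complex.normSq (z i) := Complex.normSq_nonneg _
    have htR : Complex.normSq (z i) ≤ R ^ 2 := by
      rw [Complex.normSq_eq_norm_sq]
      nlinarith [norm_nonneg (z i), hz i]
    have e1 : ‖1 + z i * (starRingEnd ℂ) (z i)‖ = 1 + Complex.normSq (z i) := by
      rw [hzz,
        show (1 : ℂ) + (Complex.normSq (z i) : ℂ) = ((1 + Complex.normSq (z i) : ℝ) : ℂ) by
          push_cast; ring,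
        Complex.norm_of_nonneg (by linarith)]
    have e2 : ‖1 - z i * (starRingEnd ℂ) (z i)‖ = 1 - Complex.normSq (z i) := by
      rw [hzz,
        show (1 : ℂ) - (Complex.normSq (z i) : ℂ) = ((1 - Complex.normSq (z i) : ℝ) : ℂ) by
          push_cast; ring,
        Complex.norm_of_nonneg (by nlinarith)]
    have hgi : g (i, i) = Real.log (1 + Complex.normSq (z i))
        - Real.log (1 - Complex.normSq (z i)) := by
      simp only [hg, e1, e2]
    have hlog1 : Real.log (1 + Complex.normSq (z i)) ≤ Real.log (1 + R ^ 2) := by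
      apply Real.log_le_log (by linarith)
      linarith
    have hlog2 : Real.log (1 - R ^ 2) ≤ Real.log (1 - Complex.normSq (z i)) := by
      apply Real.log_le_log (by linarith)
      linarith
    rw [hgi, hD, Real.log_div (by positivity) (by positivity)]
    linarith
  have hpairs := sum_pairs g hgsymm
  have hdsum : ∑ i : Fin n, g (i, i) ≤ (n : ℝ) * Real.log D := by
    calc ∑ i : Fin n, g (i, i) ≤ ∑ _i : Fin n, Real.log D :=
          Finset.sum_le_sum fun i _ => hdiag i
      _ = (n : ℝ) * Real.log D := by
          rw [Finset.sum_const, Finset.card_univ, Fintype.card_fin, nsmul_eq_mul]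
  have hlogD : 0 ≤ Real.log D := Real.log_nonneg hD1
  have hT : -(∑ p ∈ Finset.univ.filter (fun p : Fin n × Fin n => p.1 < p.2), g p)
      ≤ (n : ℝ) * Real.log D := by
    have hn0 : (0 : ℝ) ≤ (n : ℝ) * Real.log D :=
      mul_nonneg (Nat.cast_nonneg n) hlogD
    linarith [htot, hpairs, hdsum]
  have hK : (∏ p ∈ Finset.univ.filter (fun p : Fin n × Fin n => p.1 < p.2),
        ‖1 - z p.1 * (starRingEnd ℂ) (z p.2)‖
          / ‖1 + z p.1 * (starRingEnd ℂ) (z p.2)‖) ≤ D ^ n := by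
    have hKexp : (∏ p ∈ Finset.univ.filter (fun p : Fin n × Fin n => p.1 < p.2),
          ‖1 - z p.1 * (starRingEnd ℂ) (z p.2)‖
            / ‖1 + z p.1 * (starRingEnd ℂ) (z p.2)‖)
        = Real.exp (∑ p ∈ Finset.univ.filter (fun p : Fin n × Fin n => p.1 < p.2),
            (Real.log (‖1 - z p.1 * (starRingEnd ℂ) (z p.2)‖)
              - Real.log (‖1 + z p.1 * (starRingEnd ℂ) (z p.2)‖))) := by
      rw [Real.exp_sum]
      refine Finset.prod_congr rfl fun p _ => ?_
      rw [Real.exp_sub, Real.exp_log (hbpos p), Real.exp_log (hcpos p)]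
    have hsneg : ∑ p ∈ Finset.univ.filter (fun p : Fin n × Fin n => p.1 < p.2),
          (Real.log (‖1 - z p.1 * (starRingEnd ℂ) (z p.2)‖)
            - Real.log (‖1 + z p.1 * (starRingEnd ℂ) (z p.2)‖))
        = -(∑ p ∈ Finset.univ.filter (fun p : Fin n × Fin n => p.1 < p.2), g p) := by
      rw [← Finset.sum_neg_distrib]
      refine Finset.sum_congr rfl fun p _ => ?_
      simp only [hg]
      ring
    rw [hKexp, hsneg]
    calc Real.exp (-(∑ p ∈ Finset.univ.filter (fun p : Fin n × Fin n => p.1 < p.2), g p))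
        ≤ Real.exp ((n : ℝ) * Real.log D) := Real.exp_le_exp.mpr hT
      _ = D ^ n := by
          rw [Real.exp_nat_mul, Real.exp_log hD0]
  have hfac : ellProd n z = hypProd n z *
      ∏ p ∈ Finset.univ.filter (fun p : Fin n × Fin n => p.1 < p.2),
        ‖1 - z p.1 * (starRingEnd ℂ) (z p.2)‖
          / ‖1 + z p.1 * (starRingEnd ℂ) (z p.2)‖ := by
    unfold ellProd hypProd
    rw [← Finset.prod_mul_distrib]
    refine Finset.prod_congr rfl fun p _ => ?_
    rw [div_mul_div_comm,
      mul_comm (‖z p.1 - z p.2‖) (‖1 - z p.1 * (starRingEnd ℂ) (z p.2)‖),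
      mul_div_mul_left _ _ (hbpos p).ne']
  calc ellProd n z = hypProd n z *
        ∏ p ∈ Finset.univ.filter (fun p : Fin n × Fin n => p.1 < p.2),
          ‖1 - z p.1 * (starRingEnd ℂ) (z p.2)‖
            / ‖1 + z p.1 * (starRingEnd ℂ) (z p.2)‖ := hfac
    _ ≤ hypProd n z * D ^ n :=
        mul_le_mul_of_nonneg_left hK (hypProd_nonneg n z)
    _ = D ^ n * hypProd n z := mul_comm _ _

/-- Duren–Kühnau: for a compact connected `E ⊂ B²` with at least two points, the elliptic
capacity does not exceed the hyperbolic capacity: `cap_e(E) ≤ cap_h(E)`. -/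
theorem elliptic_capacity_le_hyperbolic_capacity
    (E : Set ℂ) (hE : IsCompact E) (hconn : IsConnected E)
    (hE1 : E ⊆ Metric.ball (0 : ℂ) 1)
    (h2 : ∃ a ∈ E, ∃ b ∈ E, a ≠ b) :
    ∀ Lh Le : ℝ, Tendsto (fun n : ℕ => hypDiam E n) atTop (𝓝 Lh) →
      Tendsto (fun n : ℕ => ellDiam E n) atTop (𝓝 Le) → Le ≤ Lh := by
  intro Lh Le hLh hLe
  obtain ⟨a, haE, -⟩ := h2
  have hne : E.Nonempty := ⟨a, haE⟩
  have habs : ∀ x ∈ E, ‖x‖ < 1 := by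
    intro x hx
    have := hE1 hx
    rw [Metric.mem_ball, Complex.dist_eq, sub_zero] at this
    exact this
  obtain ⟨w, hwE, hwmax⟩ := hE.exists_isMaxOn hne continuous_norm.continuousOn
  set R : ℝ := ‖w‖ with hRdef
  have hR0 : 0 ≤ R := norm_nonneg w
  have hR1 : R < 1 := habs w hwE
  have hzR : ∀ x ∈ E, ‖x‖ ≤ R := fun x hx => isMaxOn_iff.mp hwmax x hx
  have hR2 : 0 < 1 - R ^ 2 := by nlinarith
  set D : ℝ := (1 + R ^ 2) / (1 - R ^ 2) with hD
  have hD1 : 1 ≤ D := by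
    rw [hD, le_div_iff₀ hR2]
    nlinarith
  have hD0 : 0 < D := lt_of_lt_of_le one_pos hD1
  -- the sets of products
  have hSh_bdd : ∀ n : ℕ,
      BddAbove {x : ℝ | ∃ z : Fin n → ℂ, (∀ i, z i ∈ E) ∧ hypProd n z = x} := by
    intro n
    refine ⟨1, ?_⟩
    rintro x ⟨z, hzE, rfl⟩
    exact hypProd_le_one n z fun i => habs _ (hzE i)
  have hMh0 : ∀ n : ℕ,
      0 ≤ sSup {x : ℝ | ∃ z : Fin n → ℂ, (∀ i, z i ∈ E) ∧ hypProd n z = x} := by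
    intro n
    apply Real.sSup_nonneg
    rintro x ⟨z, hzE, rfl⟩
    exact hypProd_nonneg n z
  have hMe0 : ∀ n : ℕ,
      0 ≤ sSup {x : ℝ | ∃ z : Fin n → ℂ, (∀ i, z i ∈ E) ∧ ellProd n z = x} := by
    intro n
    apply Real.sSup_nonneg
    rintro x ⟨z, hzE, rfl⟩
    exact ellProd_nonneg n z
  have hMeD : ∀ n : ℕ,
      sSup {x : ℝ | ∃ z : Fin n → ℂ, (∀ i, z i ∈ E) ∧ ellProd n z = x}
        ≤ D ^ n * sSup {x : ℝ | ∃ z : Fin n → ℂ, (∀ i, z i ∈ E) ∧ hypProd n z = x} := by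
    intro n
    apply Real.sSup_le
    · rintro x ⟨z, hzE, rfl⟩
      calc ellProd n z ≤ D ^ n * hypProd n z :=
            ellProd_le_hypProd z hR0 hR1 fun i => hzR _ (hzE i)
        _ ≤ D ^ n * sSup {x : ℝ | ∃ z : Fin n → ℂ, (∀ i, z i ∈ E) ∧ hypProd n z = x} := by
            apply mul_le_mul_of_nonneg_left _ (pow_nonneg hD0.le n)
            exact le_csSup (hSh_bdd n) ⟨z, hzE, rfl⟩
    · exact mul_nonneg (pow_nonneg hD0.le n) (hMh0 n)
  -- diameter comparison for n ≥ 2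
  have hdiam : ∀ n : ℕ, 2 ≤ n →
      ellDiam E n ≤ D ^ ((2 : ℝ) / ((n : ℝ) - 1)) * hypDiam E n := by
    intro n hn
    have hn2 : (2 : ℝ) ≤ (n : ℝ) := by exact_mod_cast hn
    have hn0 : (n : ℝ) ≠ 0 := by linarith
    have hn1 : (n : ℝ) - 1 ≠ 0 := by linarith
    have hα0 : 0 ≤ (2 : ℝ) / ((n : ℝ) * ((n : ℝ) - 1)) := by
      apply div_nonneg (by norm_num)
      nlinarith
    unfold ellDiam hypDiam
    calc sSup {x : ℝ | ∃ z : Fin n → ℂ, (∀ i, z i ∈ E) ∧ ellProd n z = x}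
          ^ ((2 : ℝ) / ((n : ℝ) * ((n : ℝ) - 1)))
        ≤ (D ^ n * sSup {x : ℝ | ∃ z : Fin n → ℂ, (∀ i, z i ∈ E) ∧ hypProd n z = x})
          ^ ((2 : ℝ) / ((n : ℝ) * ((n : ℝ) - 1))) :=
          Real.rpow_le_rpow (hMe0 n) (hMeD n) hα0
      _ = (D ^ n) ^ ((2 : ℝ) / ((n : ℝ) * ((n : ℝ) - 1)))
            * sSup {x : ℝ | ∃ z : Fin n → ℂ, (∀ i, z i ∈ E) ∧ hypProd n z = x}
              ^ ((2 : ℝ) / ((n : ℝ) * ((n : ℝ) - 1))) :=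
          Real.mul_rpow (pow_nonneg hD0.le n) (hMh0 n)
      _ = D ^ ((2 : ℝ) / ((n : ℝ) - 1))
            * sSup {x : ℝ | ∃ z : Fin n → ℂ, (∀ i, z i ∈ E) ∧ hypProd n z = x}
              ^ ((2 : ℝ) / ((n : ℝ) * ((n : ℝ) - 1))) := by
          congr 1
          rw [← Real.rpow_natCast D n, ← Real.rpow_mul hD0.le]
          congr 1
          field_simp
  -- limits
  have hβ : Tendsto (fun n : ℕ => (2 : ℝ) / ((n : ℝ) - 1)) atTop (𝓝 0) := by
    apply Tendsto.div_atTop (tendsto_const_nhds : Tendsto (fun _ : ℕ => (2 : ℝ)) atTop (𝓝 2))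
    have h := tendsto_atTop_add_const_right atTop (-1 : ℝ) tendsto_natCast_atTop_atTop
    simpa [sub_eq_add_neg] using h
  have hDpow : Tendsto (fun n : ℕ => D ^ ((2 : ℝ) / ((n : ℝ) - 1))) atTop (𝓝 1) := by
    have hc : ContinuousAt (fun x : ℝ => D ^ x) 0 :=
      Real.continuousAt_const_rpow hD0.ne'
    have h := hc.tendsto.comp hβ
    simpa [Real.rpow_zero, Function.comp_def] using h
  have hg : Tendsto (fun n : ℕ => D ^ ((2 : ℝ) / ((n : ℝ) - 1)) * hypDiam E n) atTop
      (𝓝 (1 * Lh)) := hDpow.mul hLh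
  have hfinal := le_of_tendsto_of_tendsto hLe hg
    (Filter.eventually_atTop.mpr ⟨2, fun n hn => hdiam n hn⟩)
  linarith [hfinal]
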